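/- With β_m and P_m as above, for every δ with 0 < δ < 1/2 there exists M such that for all m ≥ M: P_m(m) > 1/2 + δ; hence for all large m, the probability assigned to the single well m exceeds the total probability of all other wells. -/

import Mathlib

set_option maxHeartbeats 1000000

theorem stmt_9 (cε : ℝ) (hc : 0 < cε)
    (β : ℕ → ℝ) (hβ : ∀ m, β m = cε * (2 / 3) * (Real.log 3 / Real.log 2) * 6 ^ m)
    (f : ℕ → ℕ → ℝ) (hf : ∀ m n, f m n = 3 * β m / 2 ^ (n + 1) + cε * 3 ^ n)
    (P : ℕ → ℕ → ℝ)
    (hP : ∀ m n, P m n = Real.exp (-f m n) / (∑' k : ℕ, Real.exp (-f m k))) :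
    ∀ δ : ℝ, 0 < δ → δ < 1 / 2 →
      ∃ M : ℕ, ∀ m : ℕ, M ≤ m → P m m > 1 / 2 + δ := by
  set L : ℝ := Real.log 3 / Real.log 2 with hLdef
  have hlog2 : 0 < Real.log 2 := Real.log_pos (by norm_num)
  have hlog3 : 0 < Real.log 3 := Real.log_pos (by norm_num)
  have h89 : Real.log 8 < Real.log 9 := Real.log_lt_log (by norm_num) (by norm_num)
  have h243 : Real.log 243 < Real.log 256 := Real.log_lt_log (by norm_num) (by norm_num)
  have hlog8 : Real.log 8 = 3 * Real.log 2 := by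
    rw [show (8:ℝ) = 2 ^ 3 by norm_num, Real.log_pow]; push_cast; ring
  have hlog9 : Real.log 9 = 2 * Real.log 3 := by
    rw [show (9:ℝ) = 3 ^ 2 by norm_num, Real.log_pow]; push_cast; ring
  have hlog243 : Real.log 243 = 5 * Real.log 3 := by
    rw [show (243:ℝ) = 3 ^ 5 by norm_num, Real.log_pow]; push_cast; ring
  have hlog256 : Real.log 256 = 8 * Real.log 2 := by
    rw [show (256:ℝ) = 2 ^ 8 by norm_num, Real.log_pow]; push_cast; ring
  have hL32 : (3/2 : ℝ) < L := by
    rw [hLdef, lt_div_iff₀ hlog2]; rw [hlog8, hlog9] at h89; linarith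
  have hL85 : L < 8/5 := by
    rw [hLdef, div_lt_iff₀ hlog2]; rw [hlog243, hlog256] at h243; linarith
  have hLpos : 0 < L := by linarith
  -- explicit formula for f
  have hfe : ∀ m n, f m n = cε * L * (6:ℝ) ^ m / 2 ^ n + cε * 3 ^ n := by
    intro m n
    rw [hf, hβ, pow_succ]
    have h2n : ((2:ℝ) ^ n) ≠ 0 := by positivity
    field_simp
  have h3k : ∀ k : ℕ, 1 + 2*(k:ℝ) ≤ 3 ^ k := by
    intro k
    have := one_add_mul_le_pow (show (-2:ℝ) ≤ 2 by norm_num) k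
    norm_num at this
    linarith
  have h2k : ∀ k : ℕ, (k:ℝ) + 1 ≤ 2 ^ k := by
    intro k
    have h : k + 1 ≤ 2 ^ k := by have := @Nat.lt_two_pow_self k; omega
    exact_mod_cast h
  -- f m m in explicit form
  have hfm : ∀ m, f m m = cε * L * 3 ^ m + cε * 3 ^ m := by
    intro m
    rw [hfe]
    have : (6:ℝ) ^ m = 2 ^ m * 3 ^ m := by rw [← mul_pow]; norm_num
    rw [this]
    have h2m : ((2:ℝ) ^ m) ≠ 0 := by positivity
    field_simp
  -- gap lemmas
  have hgapR : ∀ m k : ℕ, f m m + 2*cε/5 * 3 ^ m * k ≤ f m (m + k) := by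
    intro m k
    rcases Nat.eq_zero_or_pos k with hk | hk
    · subst hk; simp
    · have hk1 : (1:ℝ) ≤ k := by exact_mod_cast hk
      rw [hfm, hfe]
      have h6 : (6:ℝ) ^ m = 2 ^ m * 3 ^ m := by rw [← mul_pow]; norm_num
      have hpow : (3:ℝ) ^ (m+k) = 3 ^ m * 3 ^ k := pow_add 3 m k
      have key : L + 1 + 2/5*(k:ℝ) ≤ 3 ^ k := by
        have := h3k k; linarith
      have hpos : (0:ℝ) ≤ cε * 3 ^ m := by positivity
      have hmul := mul_le_mul_of_nonneg_left key hpos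
      have hdivpos : (0:ℝ) ≤ cε * L * 6 ^ m / 2 ^ (m+k) := by positivity
      rw [hpow]
      linarith [hmul, hdivpos]
  have hgapL : ∀ m i : ℕ, i < m → f m m + 2*cε/5 * 3 ^ m * ((m - i : ℕ):ℝ) ≤ f m i := by
    intro m i him
    set k := m - i with hkdef
    have hik : i + k = m := by omega
    have hk : 1 ≤ k := by omega
    have hk1 : (1:ℝ) ≤ k := by exact_mod_cast hk
    rw [hfm, hfe]
    have h6 : (6:ℝ) ^ m = 2 ^ m * 3 ^ m := by rw [← mul_pow]; norm_num
    have h2split : (2:ℝ) ^ m = 2 ^ i * 2 ^ k := by rw [← pow_add, hik]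
    have hfrac : cε * L * (6:ℝ) ^ m / 2 ^ i = cε * L * 3 ^ m * 2 ^ k := by
      rw [h6, h2split]
      have : ((2:ℝ) ^ i) ≠ 0 := by positivity
      field_simp
    rw [hfrac]
    have key : L + 1 + 2/5*(k:ℝ) ≤ L * 2 ^ k := by
      have h2 := h2k k
      nlinarith [h2, hk1, hL32]
    have hpos : (0:ℝ) ≤ cε * 3 ^ m := by positivity
    have hmul := mul_le_mul_of_nonneg_left key hpos
    have h3i : (0:ℝ) < 3 ^ i := by positivity
    linarith [hmul, (mul_pos hc h3i).le]
  -- summability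
  have hsum : ∀ m, Summable (fun n => Real.exp (-f m n)) := by
    intro m
    apply Summable.of_nonneg_of_le (f := fun n => Real.exp (-cε) ^ n)
      (fun n => (Real.exp_pos _).le)
    · intro n
      rw [← Real.exp_nat_mul]
      apply Real.exp_le_exp.mpr
      rw [hfe]
      have h1 : (0:ℝ) ≤ cε * L * 6 ^ m / 2 ^ n := by positivity
      have h2 : (n:ℝ) ≤ 3 ^ n := by
        have := h3k n; linarith
      nlinarith [mul_le_mul_of_nonneg_left h2 hc.le]
    · exact summable_geometric_of_lt_one (Real.exp_pos _).le
        (Real.exp_lt_one_iff.mpr (by linarith))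
  intro δ hδ0 hδ2
  set ε0 : ℝ := (1/2 - δ)/2 with hε0def
  have hε0 : 0 < ε0 := by rw [hε0def]; linarith
  refine ⟨⌈5/(2*cε) * (-Real.log ε0)⌉₊ + 1, fun m hm => ?_⟩
  -- r for this m
  set r : ℝ := Real.exp (-(2*cε/5 * 3 ^ m)) with hrdef
  have hr0 : 0 < r := Real.exp_pos _
  have hr1 : r < 1 := Real.exp_lt_one_iff.mpr (by
    have : (0:ℝ) < 2*cε/5 * 3 ^ m := by positivity
    linarith)
  have hrε : r < ε0 := by
    have hT : 5/(2*cε) * (-Real.log ε0) < (m:ℝ) := by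
      calc 5/(2*cε) * (-Real.log ε0) ≤ (⌈5/(2*cε) * (-Real.log ε0)⌉₊ : ℝ) := Nat.le_ceil _
        _ < ((⌈5/(2*cε) * (-Real.log ε0)⌉₊ + 1 : ℕ) : ℝ) := by exact_mod_cast Nat.lt_succ_self _
        _ ≤ (m:ℝ) := by exact_mod_cast hm
    have hm3 : (m:ℝ) ≤ 3 ^ m := by have := h3k m; linarith
    have hlt : -Real.log ε0 < 2*cε/5 * 3 ^ m := by
      have h1 : 5/(2*cε) * (-Real.log ε0) < 3 ^ m := lt_of_lt_of_le hT hm3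
      have h2 : (0:ℝ) < 2*cε/5 := by positivity
      calc -Real.log ε0 = 2*cε/5 * (5/(2*cε) * (-Real.log ε0)) := by field_simp
        _ < 2*cε/5 * 3 ^ m := mul_lt_mul_of_pos_left h1 h2
    calc r = Real.exp (-(2*cε/5 * 3 ^ m)) := rfl
      _ < Real.exp (Real.log ε0) := Real.exp_lt_exp.mpr (by linarith)
      _ = ε0 := Real.exp_log hε0
  have ha := hsum m
  set E : ℝ := Real.exp (-f m m) with hEdef
  have hE : 0 < E := Real.exp_pos _
  have hrk : ∀ k : ℕ, E * r ^ k = Real.exp (-(f m m + 2*cε/5 * 3 ^ m * k)) := by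
    intro k
    rw [hrdef, hEdef, ← Real.exp_nat_mul, ← Real.exp_add]
    congr 1
    ring
  have hle : ∀ k : ℕ, Real.exp (-f m (m + k)) ≤ E * r ^ k := by
    intro k
    rw [hrk]
    exact Real.exp_le_exp.mpr (neg_le_neg (hgapR m k))
  have hleL : ∀ i : ℕ, i < m → Real.exp (-f m i) ≤ E * r ^ (m - i) := by
    intro i hi
    rw [hrk]
    exact Real.exp_le_exp.mpr (neg_le_neg (hgapL m i hi))
  have hgeom : Summable (fun k : ℕ => r ^ k) := summable_geometric_of_lt_one hr0.le hr1
  have h1r : 0 < 1 - r := by linarith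
  have htail : (∑' k : ℕ, Real.exp (-f m (k + m))) ≤ E * (1 - r)⁻¹ := by
    calc (∑' k : ℕ, Real.exp (-f m (k + m))) ≤ ∑' k : ℕ, E * r ^ k := by
          apply Summable.tsum_le_tsum
          · intro k; rw [add_comm k m]; exact hle k
          · exact (summable_nat_add_iff m).mpr ha
          · exact hgeom.mul_left E
      _ = E * (1 - r)⁻¹ := by rw [tsum_mul_left, tsum_geometric_of_lt_one hr0.le hr1]
  have hhead : (∑ i ∈ Finset.range m, Real.exp (-f m i)) ≤ E * (r * (1 - r)⁻¹) := by
    have hsumle : ∑ i ∈ Finset.range m, r ^ i ≤ (1 - r)⁻¹ := by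
      rw [← tsum_geometric_of_lt_one hr0.le hr1]
      exact Summable.sum_le_tsum _ (fun i _ => by positivity) hgeom
    calc (∑ i ∈ Finset.range m, Real.exp (-f m i))
        ≤ ∑ i ∈ Finset.range m, E * r ^ (m - i) :=
          Finset.sum_le_sum (fun i hi => hleL i (Finset.mem_range.mp hi))
      _ = ∑ i ∈ Finset.range m, E * r ^ (i + 1) := by
          rw [← Finset.sum_range_reflect (fun i => E * r ^ (m - i)) m]
          apply Finset.sum_congr rfl
          intro j hj
          congr 2
          have := Finset.mem_range.mp hj
          omega
      _ = E * (r * ∑ i ∈ Finset.range m, r ^ i) := by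
          rw [Finset.mul_sum]
          rw [Finset.mul_sum]
          apply Finset.sum_congr rfl
          intro j _
          ring
      _ ≤ E * (r * (1 - r)⁻¹) :=
          mul_le_mul_of_nonneg_left (mul_le_mul_of_nonneg_left hsumle hr0.le) hE.le
  set Z : ℝ := ∑' k : ℕ, Real.exp (-f m k) with hZdef
  have hsplit : (∑ i ∈ Finset.range m, Real.exp (-f m i))
      + (∑' k : ℕ, Real.exp (-f m (k + m))) = Z := ha.sum_add_tsum_nat_add m
  have hZup : Z ≤ E * (r * (1 - r)⁻¹) + E * (1 - r)⁻¹ := by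
    rw [← hsplit]; exact add_le_add hhead htail
  have hZlo : E ≤ Z := Summable.le_tsum ha m (fun j _ => (Real.exp_pos _).le)
  have hZ : 0 < Z := lt_of_lt_of_le hE hZlo
  rw [hP]
  rw [gt_iff_lt, lt_div_iff₀ hZ]
  have hZup' : Z * (1 - r) ≤ E * r + E := by
    calc Z * (1 - r) ≤ (E * (r * (1 - r)⁻¹) + E * (1 - r)⁻¹) * (1 - r) :=
          mul_le_mul_of_nonneg_right hZup h1r.le
      _ = E * r + E := by field_simp
  have hrE : E * r < E * ((1/2 - δ)/2) := mul_lt_mul_of_pos_left hrε hE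
  nlinarith [hZup', hrE, hE, hZ, hr0, hδ0, hδ2, h1r, mul_pos hE hr0,
    mul_le_mul_of_nonneg_left hZup' (by linarith : (0:ℝ) ≤ 1/2 + δ),
    mul_pos hZ h1r, mul_pos (mul_pos hE hr0) hδ0]
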